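/- Turing's n-ary multiple fixed-point combinators are multiple fixed-point combinators: for every n ≥ 1, every 1 ≤ k ≤ n, and all λ-terms F_1,…,F_n, (Ψ_k^n F_1 ⋯ F_n) =βη (F_k (Ψ_1^n F_1 ⋯ F_n) ⋯ (Ψ_n^n F_1 ⋯ F_n)). -/

import Mathlib

namespace LC

/-- Untyped λ-terms, de Bruijn indices. -/
inductive Tm : Type
  | var : ℕ → Tm
  | app : Tm → Tm → Tm
  | lam : Tm → Tm
  deriving DecidableEq

namespace Tm

/-- Shift the free variables ≥ c up by one. -/
def lift (c : ℕ) : Tm → Tm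
  | var n => if n < c then var n else var (n + 1)
  | app a b => app (lift c a) (lift c b)
  | lam a => lam (lift (c + 1) a)

/-- Substitute `s` for the free variable `k`. -/
def subst (k : ℕ) (s : Tm) : Tm → Tm
  | var n => if n = k then s else if k < n then var (n - 1) else var n
  | app a b => app (subst k s a) (subst k s b)
  | lam a => lam (subst (k + 1) (lift 0 s) a)

/-- One-step βη-reduction (with congruence closure). -/
inductive Step : Tm → Tm → Prop
  | beta (a b : Tm) : Step (app (lam a) b) (subst 0 b a)
  | eta (a : Tm) : Step (lam (app (lift 0 a) (var 0))) a
  | appL {a a' : Tm} (b : Tm) : Step a a' → Step (app a b) (app a' b)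
  | appR (a : Tm) {b b' : Tm} : Step b b' → Step (app a b) (app a b')
  | lamCongr {a a' : Tm} : Step a a' → Step (lam a) (lam a')

/-- βη-equivalence: the equivalence relation generated by βη-reduction. -/
def BetaEta : Tm → Tm → Prop := Relation.EqvGen Step

/-- Multi-step βη-reduction: reflexive-transitive closure of βη-reduction. -/
def Reduces : Tm → Tm → Prop := Relation.ReflTransGen Step

/-- I = λx.x -/
def I : Tm := lam (var 0)
/-- K = λxy.x -/
def K : Tm := lam (lam (var 1))
/-- B = λxyz.(x (y z)) -/
def B : Tm := lam (lam (lam (app (var 2) (app (var 1) (var 0)))))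
/-- C = λxyz.(x z y) -/
def C : Tm := lam (lam (lam (app (app (var 2) (var 0)) (var 1))))
/-- S = λxyz.(x z (y z)) -/
def S : Tm := lam (lam (lam (app (app (var 2) (var 0)) (app (var 1) (var 0)))))

/-- body of the n-th Church numeral: s (s ⋯ (s z)⋯), n times. -/
def churchBody : ℕ → Tm
  | 0 => var 0
  | n + 1 => app (var 1) (churchBody n)

/-- The n-th Church numeral c_n = λsz.(s (s ⋯ (s z)⋯)). -/
def church (n : ℕ) : Tm := lam (lam (churchBody n))

/-- n nested λ-abstractions. -/
def lamN : ℕ → Tm → Tm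
  | 0, t => t
  | n + 1, t => lam (lamN n t)

/-- Shift all free variables up by n. -/
def liftN (n : ℕ) (t : Tm) : Tm := (lift 0)^[n] t

/-- t (var (a+k-1)) ⋯ (var (a+1)) (var a) : left-associated application of t
to k variables with descending indices. -/
def appVars (t : Tm) (a k : ℕ) : Tm :=
  ((List.range k).reverse).foldl (fun s i => app s (var (a + i))) t

/-- t (var a) (var (a+1)) ⋯ (var (a+k-1)) : left-associated application of t
to k variables with ascending indices. -/
def appVarsAsc (t : Tm) (a k : ℕ) : Tm :=
  (List.range k).foldl (fun s i => app s (var (a + i))) t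

/-- Left-associated application of t to a list of terms. -/
def appList (t : Tm) (l : List Tm) : Tm := l.foldl app t

/-- K_n = λp x_1…x_n. p -/
def Kn (n : ℕ) : Tm := lamN (n + 1) (var n)
/-- S_n = λpq x_1…x_n.(p x_1⋯x_n (q x_1⋯x_n)) -/
def Sn (n : ℕ) : Tm :=
  lamN (n + 2) (app (appVars (var (n + 1)) 0 n) (appVars (var n) 0 n))
/-- B_n = λpq x_1…x_n.(p (q x_1⋯x_n)) -/
def Bn (n : ℕ) : Tm := lamN (n + 2) (app (var (n + 1)) (appVars (var n) 0 n))
/-- C_n = λpq x_1…x_n.(p x_1⋯x_n q) -/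
def Cn (n : ℕ) : Tm := lamN (n + 2) (app (appVars (var (n + 1)) 0 n) (var n))


/-- V_j = λx_1…x_n f_1…f_n.(f_j (x_1 x_1 ⋯ x_n f_1 ⋯ f_n) ⋯ (x_n x_1 ⋯ x_n f_1 ⋯ f_n)).
Under the 2n binders, x_i = var (2n - i) and f_j = var (n - j). -/
def V (n j : ℕ) : Tm :=
  lamN (2 * n) (((List.range n).reverse).foldl
    (fun s i => app s (appVars (appVars (var (n + i)) n n) 0 n)) (var (n - j)))

/-- Turing's n-ary multiple fixed-point combinator Ψ_k^n = (V_k V_1 ⋯ V_n). -/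
def Psi (n k : ℕ) : Tm :=
  appList (V n k) ((List.range n).map fun i => V n (i + 1))
/-! ### Auxiliary lemmas for the proof -/

lemma lift_lift (t : Tm) : ∀ c c', c' ≤ c → lift (c + 1) (lift c' t) = lift c' (lift c t) := by
  induction t with
  | var n =>
    intro c c' h
    rcases lt_or_ge n c' with h1 | h1
    · simp [lift, h1, show n < c by omega, show n < c + 1 by omega]
    · rcases lt_or_ge n c with h2 | h2
      · simp [lift, h2, show ¬ n < c' by omega, show n + 1 < c + 1 by omega,
          show ¬ n + 1 < c' by omega]
      · simp [lift, show ¬ n < c by omega, show ¬ n < c' by omega,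
          show ¬ n + 1 < c + 1 by omega, show ¬ n + 1 < c' by omega]
  | app a b iha ihb => intro c c' h; simp [lift, iha c c' h, ihb c c' h]
  | lam a iha => intro c c' h; simp [lift, iha (c + 1) (c' + 1) (by omega)]

lemma subst_lift (t : Tm) : ∀ k s, subst k s (lift k t) = t := by
  induction t with
  | var n =>
    intro k s
    simp only [lift]
    rcases lt_or_ge n k with h | h
    · rw [if_pos h]; simp [subst, show n ≠ k by omega, show ¬ k < n by omega]
    · rw [if_neg (by omega)]; simp [subst, show n + 1 ≠ k by omega, show k < n + 1 by omega]
  | app a b iha ihb => intro k s; simp [lift, subst, iha, ihb]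
  | lam a iha => intro k s; simp [lift, subst, iha]

lemma liftN_succ' (m : ℕ) (a : Tm) : liftN (m + 1) a = lift 0 (liftN m a) := by
  simp [liftN, Function.iterate_succ_apply']

lemma lift_liftN : ∀ j k a, j ≤ k → lift j (liftN k a) = liftN (k + 1) a := by
  intro j
  induction j with
  | zero => intro k a _; rw [liftN_succ']
  | succ j ih =>
    intro k a h
    obtain ⟨k', rfl⟩ : ∃ k', k = k' + 1 := ⟨k - 1, by omega⟩
    rw [liftN_succ', lift_lift _ j 0 (by omega), ih k' a (by omega), ← liftN_succ']

lemma subst_liftN (j m : ℕ) (s a : Tm) (h : j < m) :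
    subst j s (liftN m a) = liftN (m - 1) a := by
  obtain ⟨m', rfl⟩ : ∃ m', m = m' + 1 := ⟨m - 1, by omega⟩
  rw [← lift_liftN j m' a (by omega), subst_lift]
  simp

lemma subst_lamN (m : ℕ) : ∀ k s b, subst k s (lamN m b) = lamN m (subst (k + m) (liftN m s) b) := by
  induction m with
  | zero => intro k s b; simp [lamN, liftN]
  | succ m ih =>
    intro k s b
    show subst k s (lam (lamN m b)) = lam (lamN m _)
    simp only [subst, ih]
    rw [show liftN m (lift 0 s) = liftN (m + 1) s from by
          simp [liftN, Function.iterate_succ_apply],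
        show k + 1 + m = k + (m + 1) by omega]

/-- Iterated substitution performed by successive β-steps. -/
def subList : List Tm → Tm → Tm
  | [], b => b
  | a :: l, b => subList l (subst l.length (liftN l.length a) b)

lemma subList_app (l : List Tm) : ∀ a b, subList l (app a b) = app (subList l a) (subList l b) := by
  induction l with
  | nil => intro a b; rfl
  | cons x l ih => intro a b; simp [subList, subst, ih]

lemma subList_liftN : ∀ (l : List Tm) (a : Tm), subList l (liftN l.length a) = a := by
  intro l
  induction l with
  | nil => intro a; simp [subList, liftN]
  | cons x l ih =>
    intro a
    show subList l (subst l.length (liftN l.length x) (liftN (l.length + 1) a)) = a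
    rw [subst_liftN _ _ _ _ (by omega)]
    simpa using ih a

lemma subList_var : ∀ (l : List Tm) (v : ℕ), v < l.length →
    subList l (var v) = l.getD (l.length - 1 - v) (var 0) := by
  intro l
  induction l with
  | nil => intro v h; simp at h
  | cons x l ih =>
    intro v h
    show subList l (subst l.length (liftN l.length x) (var v)) = _
    rcases eq_or_lt_of_le (Nat.lt_succ_iff.mp h) with h1 | h1
    · subst h1
      rw [show subst l.length (liftN l.length x) (var l.length) = liftN l.length x by
            simp [subst]]
      rw [subList_liftN]
      simp
    · rw [show subst l.length (liftN l.length x) (var v)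
          = var v by simp [subst, show v ≠ l.length by omega, show ¬ l.length < v by omega]]
      rw [ih v h1]
      rw [show (x :: l).length - 1 - v = (l.length - 1 - v) + 1 by simp; omega]
      simp

lemma step_appList {a a' : Tm} (l : List Tm) (h : Step a a') :
    Step (appList a l) (appList a' l) := by
  induction l generalizing a a' with
  | nil => exact h
  | cons x l ih => exact ih (Step.appL x h)

lemma red_subList : ∀ (l : List Tm) (b : Tm), Reduces (appList (lamN l.length b) l) (subList l b) := by
  intro l
  induction l with
  | nil => intro b; exact Relation.ReflTransGen.refl
  | cons a l ih =>
    intro b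
    show Reduces (appList (app (lam (lamN l.length b)) a) l) _
    refine Relation.ReflTransGen.head (step_appList l (Step.beta _ a)) ?_
    rw [subst_lamN]
    simpa [subList, Reduces] using ih (subst (0 + l.length) (liftN l.length a) b)

lemma subList_foldl {α : Type} (L : List Tm) (h : α → Tm) (xs : List α) :
    ∀ t, subList L (xs.foldl (fun s x => app s (h x)) t)
      = xs.foldl (fun s x => app s (subList L (h x))) (subList L t) := by
  induction xs with
  | nil => intro t; rfl
  | cons x xs ih => intro t; simp only [List.foldl_cons, ih, subList_app]

lemma foldl_app_eq_appList {α : Type} (g : α → Tm) (xs : List α) (t : Tm) :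
    xs.foldl (fun s x => app s (g x)) t = appList t (xs.map g) := by
  rw [appList, List.foldl_map]

lemma map_reverse_range {α : Type} (n : ℕ) (g g' : ℕ → α) (h : ∀ j, j < n → g (n - 1 - j) = g' j) :
    ((List.range n).reverse).map g = (List.range n).map g' := by
  apply List.ext_getElem
  · simp
  · intro i h1 h2
    simp only [List.getElem_map, List.getElem_reverse, List.length_range, List.getElem_range] at *
    exact h i (by simpa using h2)


lemma subList_appVars (L : List Tm) (t : Tm) (a m : ℕ) :
    subList L (appVars t a m)
      = appList (subList L t) (((List.range m).reverse).map fun i => subList L (var (a + i))) := by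
  refine (subList_foldl L (fun i => var (a + i)) _ t).trans ?_
  exact foldl_app_eq_appList (fun i => subList L (var (a + i))) _ _

lemma getD_map_range {α : Type} (m i : ℕ) (f : ℕ → α) (d : α) (h : i < m) :
    ((List.range m).map f).getD i d = f i := by
  rw [List.getD_eq_getElem _ _ (by simpa using h)]
  simp

lemma reduces_betaEta {a b : Tm} (h : Reduces a b) : BetaEta a b := by
  induction h with
  | refl => exact Relation.EqvGen.refl _
  | tail _ s ih => exact Relation.EqvGen.trans _ _ _ ih (Relation.EqvGen.rel _ _ s)

/-- for n ≥ 1, 1 ≤ k ≤ n and all terms F_1,…,F_n,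
(Ψ_k^n F_1 ⋯ F_n) =βη (F_k (Ψ_1^n F_1 ⋯ F_n) ⋯ (Ψ_n^n F_1 ⋯ F_n)). -/
theorem turing_multiple_fixed_points (n k : ℕ) (hn : 1 ≤ n) (hk : 1 ≤ k)
    (hkn : k ≤ n) (F : ℕ → Tm) :
    BetaEta (appList (Psi n k) ((List.range n).map fun i => F (i + 1)))
      (appList (F k) ((List.range n).map fun j =>
        appList (Psi n (j + 1)) ((List.range n).map fun i => F (i + 1)))) := by
  set Vs := (List.range n).map (fun i => V n (i + 1)) with hVs
  set Fs := (List.range n).map (fun i => F (i + 1)) with hFs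
  set L := Vs ++ Fs with hL
  have hVslen : Vs.length = n := by simp [hVs]
  have hFslen : Fs.length = n := by simp [hFs]
  have hLlen : L.length = n + n := by simp [hL, hVs, hFs]
  have hA : ∀ m, appList (Psi n m) Fs = appList (V n m) L := by
    intro m
    rw [Psi, ← hVs, hL]
    simp only [appList, List.foldl_append]
  have hvarV : ∀ i, i < n → subList L (var (n + i)) = V n (n - i) := by
    intro i hi
    rw [subList_var L (n + i) (by rw [hLlen]; omega), hLlen, hL,
        List.getD_append _ _ _ _ (by rw [hVslen]; omega),
        show n + n - 1 - (n + i) = n - 1 - i by omega, hVs,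
        getD_map_range n _ _ _ (by omega)]
    congr 1; omega
  have hvarF : ∀ j, j < n → subList L (var j) = F (n - j) := by
    intro j hj
    rw [subList_var L j (by rw [hLlen]; omega), hLlen, hL,
        List.getD_append_right _ _ _ _ (by rw [hVslen]; omega), hVslen,
        show n + n - 1 - j - n = n - 1 - j by omega, hFs,
        getD_map_range n _ _ _ (by omega)]
    congr 1; omega
  have hvark : subList L (var (n - k)) = F k := by
    rw [subList_var L (n - k) (by rw [hLlen]; omega), hLlen, hL,
        List.getD_append_right _ _ _ _ (by rw [hVslen]; omega), hVslen,
        show n + n - 1 - (n - k) - n = k - 1 by omega, hFs,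
        getD_map_range n _ _ _ (by omega)]
    congr 1; omega
  have hvarsV : ((List.range n).reverse).map (fun j => subList L (var (n + j))) = Vs := by
    rw [hVs]
    apply map_reverse_range
    intro j hj
    rw [hvarV (n - 1 - j) (by omega)]
    congr 1; omega
  have hvarsF : ((List.range n).reverse).map (fun j => subList L (var (0 + j))) = Fs := by
    rw [hFs]
    apply map_reverse_range
    intro j hj
    rw [show (0 + (n - 1 - j)) = n - 1 - j by omega, hvarF (n - 1 - j) (by omega)]
    congr 1; omega
  have hinner : ∀ i, i < n →
      subList L (appVars (appVars (var (n + i)) n n) 0 n) = appList (V n (n - i)) L := by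
    intro i hi
    rw [subList_appVars, hvarsF, subList_appVars, hvarsV, hvarV i hi, hL]
    simp only [appList, List.foldl_append]
  have hbody : subList L (((List.range n).reverse).foldl
      (fun s i => app s (appVars (appVars (var (n + i)) n n) 0 n)) (var (n - k)))
      = appList (subList L (var (n - k)))
        (((List.range n).reverse).map fun i =>
          subList L (appVars (appVars (var (n + i)) n n) 0 n)) :=
    (subList_foldl L (fun i => appVars (appVars (var (n + i)) n n) 0 n) _ _).trans
      (foldl_app_eq_appList _ _ _)
  have hmap : (((List.range n).reverse).map fun i =>
        subList L (appVars (appVars (var (n + i)) n n) 0 n))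
      = (List.range n).map fun j => appList (V n (j + 1)) L := by
    apply map_reverse_range
    intro j hj
    rw [hinner (n - 1 - j) (by omega), show n - (n - 1 - j) = j + 1 by omega]
  have hred : Reduces (appList (Psi n k) Fs)
      (appList (F k) ((List.range n).map fun j => appList (V n (j + 1)) L)) := by
    rw [hA k]
    have h1 : V n k = lamN L.length (((List.range n).reverse).foldl
        (fun s i => app s (appVars (appVars (var (n + i)) n n) 0 n)) (var (n - k))) := by
      rw [V, hLlen, two_mul]
    rw [h1]
    have h2 := red_subList L (((List.range n).reverse).foldl
        (fun s i => app s (appVars (appVars (var (n + i)) n n) 0 n)) (var (n - k)))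
    rw [hbody, hvark, hmap] at h2
    exact h2
  have hfin : ((List.range n).map fun j => appList (Psi n (j + 1)) Fs)
      = (List.range n).map fun j => appList (V n (j + 1)) L := by
    simp only [hA]
  rw [hfin]
  exact reduces_betaEta hred


end Tm
end LC
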